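/- Fix L > 0 and k ∈ ℕ. For any sequences (β₁ⁿ), (β₂ⁿ) with 0 < β₁ⁿ < β₂ⁿ, β₁ⁿ/β₂ⁿ → 0, and L < aⁿ(β₁ⁿ+β₂ⁿ) for all large n (where aⁿ is the unique positive zero of F_{β₁ⁿ,β₂ⁿ} and φⁿ(τ) := (aⁿβ₁ⁿ − 1)(e^{aⁿτ} − 1)/(aⁿ)² + τ/aⁿ), the functions u ↦ (aⁿ/β₂ⁿ)·φⁿ(β₁ⁿ+β₂ⁿ − u/aⁿ) converge to u ↦ (e^u − 1)/e^u uniformly on [0,L] together with their derivatives up to order k; that is, for each j ≤ k, the j-th derivatives converge uniformly on [0,L]. -/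

import Mathlib

/-- Hamilton football angle function: `F β₁ β₂ x = β₁x − 1 + (β₂x + 1) e^{−x(β₁+β₂)}`. -/
noncomputable def F (β₁ β₂ x : ℝ) : ℝ :=
  β₁ * x - 1 + (β₂ * x + 1) * Real.exp (-x * (β₁ + β₂))

open Filter Real

lemma profile_eq (A B1 B2 : ℝ) (hA : 0 < A) (hB1 : 0 < B1) (hB12 : B1 < B2)
    (hF : F B1 B2 A = 0) (u : ℝ) :
    (A / B2) * ((A * B1 - 1) * (Real.exp (A * (B1 + B2 - u / A)) - 1) / A ^ 2
      + (B1 + B2 - u / A) / A)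
      = (1 - Real.exp (-u)) + (1 / (A * B2)) * (1 - Real.exp (-u) - u) := by
  have hB2 : 0 < B2 := hB1.trans hB12
  have hAne : A ≠ 0 := ne_of_gt hA
  have harg : A * (B1 + B2 - u / A) = A * (B1 + B2) - u := by field_simp
  have hexp : Real.exp (A * (B1 + B2 - u / A))
      = Real.exp (A * (B1 + B2)) * Real.exp (-u) := by
    rw [harg, ← Real.exp_add]; ring_nf
  have hKpos := Real.exp_pos (A * (B1 + B2))
  have hK : (A * B1 - 1) * Real.exp (A * (B1 + B2)) = -(A * B2 + 1) := by
    have hF' : B1 * A - 1 + (B2 * A + 1) * Real.exp (-A * (B1 + B2)) = 0 := hF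
    have hinv : Real.exp (-A * (B1 + B2)) = (Real.exp (A * (B1 + B2)))⁻¹ := by
      rw [← Real.exp_neg]; ring_nf
    rw [hinv] at hF'
    field_simp at hF'
    linarith
  rw [hexp, show (A * B1 - 1) * (Real.exp (A * (B1 + B2)) * Real.exp (-u) - 1)
      = -(A * B2 + 1) * Real.exp (-u) - (A * B1 - 1) from by
        linear_combination Real.exp (-u) * hK]
  field_simp
  ring

set_option maxHeartbeats 1000000 in
lemma x_atTop (L : ℝ) (hL : 0 < L) (β₁ β₂ a : ℕ → ℝ)
    (h : ∀ n, 0 < β₁ n ∧ β₁ n < β₂ n)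
    (hratio : Filter.Tendsto (fun n => β₁ n / β₂ n) Filter.atTop (nhds 0))
    (ha : ∀ n, 0 < a n ∧ F (β₁ n) (β₂ n) (a n) = 0)
    (hdom : ∀ᶠ n in Filter.atTop, L < a n * (β₁ n + β₂ n)) :
    Tendsto (fun n => a n * β₂ n) atTop atTop := by
  rw [Filter.tendsto_atTop]
  intro M0
  set M : ℝ := max M0 1 with hM
  have hM1 : (1:ℝ) ≤ M := le_max_right _ _
  have hM0 : M0 ≤ M := le_max_left _ _
  set δ : ℝ := (L ^ 2 / 16) / (1 + M + M ^ 2 / 4) with hδ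
  have hDpos : (0:ℝ) < 1 + M + M ^ 2 / 4 := by positivity
  have hδpos : 0 < δ := by positivity
  set ε₀ : ℝ := min 1 (Real.sqrt δ / (M + 1)) with hε₀
  have hε₀pos : 0 < ε₀ := by
    apply lt_min one_pos
    positivity
  have hsq : Real.sqrt δ ^ 2 = δ := Real.sq_sqrt hδpos.le
  have hεev : ∀ᶠ n in atTop, |β₁ n / β₂ n| < ε₀ := by
    have := Metric.tendsto_nhds.mp hratio ε₀ hε₀pos
    simpa [Real.dist_eq, abs_div] using this
  have hε₀1 : ε₀ ≤ 1 := min_le_left _ _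
  have hε₀s : ε₀ ≤ Real.sqrt δ / (M + 1) := min_le_right _ _
  clear_value M δ ε₀
  filter_upwards [hdom, hεev] with n hdomn hεn
  -- notation
  set x : ℝ := a n * β₂ n with hx
  set ε : ℝ := β₁ n / β₂ n with hε
  obtain ⟨hb1, hb12⟩ := h n
  obtain ⟨hapos, hFa⟩ := ha n
  have hb2 : 0 < β₂ n := hb1.trans hb12
  have hxpos : 0 < x := mul_pos hapos hb2
  have hεpos : 0 < ε := div_pos hb1 hb2
  have hεlt : ε < ε₀ := (le_abs_self ε).trans_lt hεn
  have hεlt1 : ε < 1 := hεlt.trans_le hε₀1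
  have hεb : ε * β₂ n = β₁ n := by rw [hε]; exact div_mul_cancel₀ _ hb2.ne'
  have hab : a n * (β₁ n + β₂ n) = x * (1 + ε) := by
    rw [hx]; linear_combination (-(a n)) * hεb
  have hb1a : β₁ n * a n = ε * x := by rw [hx]; linear_combination (-(a n)) * hεb
  have hxL : L / 2 < x := by
    rw [hab] at hdomn
    have h2x : x * (1 + ε) ≤ x * 2 := mul_le_mul_of_nonneg_left (by linarith) hxpos.le
    linarith
  by_contra hcon
  push_neg at hcon
  have hxM : x < M := lt_of_lt_of_le hcon hM0
  -- from F = 0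
  have hE : Real.exp (-(a n) * (β₁ n + β₂ n)) = Real.exp (-x) * Real.exp (-(ε * x)) := by
    rw [← Real.exp_add]
    congr 1
    rw [show -(a n) * (β₁ n + β₂ n) = -(a n * (β₁ n + β₂ n)) by ring, hab]; ring
  have hFa' : β₁ n * a n - 1 + (β₂ n * a n + 1) * Real.exp (-(a n) * (β₁ n + β₂ n)) = 0 := by
    have := hFa; unfold F at this; linarith [this]
  have hmain : (x + 1) * (Real.exp (-x) * Real.exp (-(ε * x))) = 1 - ε * x := by
    rw [← hE]
    have : β₂ n * a n = x := by rw [hx]; ring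
    linarith [hFa', hb1a, this ▸ hFa']
  clear_value x ε
  clear hx hε hdomn hεn hεev
  -- derive contradiction
  have h1εx : 0 < 1 - ε * x := by
    rw [← hmain]
    positivity
  have hP : (x + 1) * Real.exp (-x) = (1 - ε * x) * Real.exp (ε * x) := by
    have h0 : Real.exp (-(ε * x)) * Real.exp (ε * x) = 1 := by
      rw [← Real.exp_add]; simp
    linear_combination Real.exp (ε * x) * hmain - (x + 1) * Real.exp (-x) * h0
  have hlow : 1 - ε ^ 2 * x ^ 2 ≤ (x + 1) * Real.exp (-x) := by
    rw [hP]
    have t : ε * x + 1 ≤ Real.exp (ε * x) := by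
      have := Real.add_one_le_exp (ε * x); linarith
    calc 1 - ε ^ 2 * x ^ 2 = (1 - ε * x) * (ε * x + 1) := by ring
      _ ≤ (1 - ε * x) * Real.exp (ε * x) := mul_le_mul_of_nonneg_left t h1εx.le
  have hexpx : (1 + x / 2) ^ 2 ≤ Real.exp x := by
    have h1 : 1 + x / 2 ≤ Real.exp (x / 2) := by
      have := Real.add_one_le_exp (x / 2); linarith
    have h2 : Real.exp (x / 2) * Real.exp (x / 2) = Real.exp x := by
      rw [← Real.exp_add]; ring_nf
    calc (1 + x / 2) ^ 2 = (1 + x / 2) * (1 + x / 2) := sq (1 + x/2) ▸ sq (1 + x/2) ▸ (sq (1+x/2)).symm ▸ by ring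
      _ ≤ Real.exp (x / 2) * Real.exp (x / 2) :=
          mul_le_mul h1 h1 (by linarith) (Real.exp_pos _).le
      _ = Real.exp x := h2
  have hup : (x + 1) * Real.exp (-x) * (1 + x + x ^ 2 / 4) ≤ x + 1 := by
    have hE1 : Real.exp (-x) * Real.exp x = 1 := by rw [← Real.exp_add]; simp
    have hD : 1 + x + x ^ 2 / 4 ≤ Real.exp x := by
      calc 1 + x + x ^ 2 / 4 = (1 + x / 2) ^ 2 := by ring
        _ ≤ Real.exp x := hexpx
    calc (x + 1) * Real.exp (-x) * (1 + x + x ^ 2 / 4)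
        ≤ (x + 1) * Real.exp (-x) * Real.exp x :=
          mul_le_mul_of_nonneg_left hD (by positivity)
      _ = x + 1 := by rw [mul_assoc, hE1, mul_one]
  have hεx : ε * x < Real.sqrt δ := by
    have h1 : ε₀ ≤ Real.sqrt δ / (M + 1) := hε₀s
    have h2 : ε * x < ε₀ * M := mul_lt_mul hεlt hxM.le hxpos hε₀pos.le
    have h3 : ε₀ * M < Real.sqrt δ := by
      have hM1' : (0:ℝ) < M + 1 := by linarith
      have h4 : ε₀ * (M + 1) ≤ Real.sqrt δ := by
        calc ε₀ * (M + 1) ≤ (Real.sqrt δ / (M + 1)) * (M + 1) :=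
              mul_le_mul_of_nonneg_right h1 hM1'.le
          _ = Real.sqrt δ := by field_simp
      have h5 : ε₀ * M < ε₀ * (M + 1) :=
        mul_lt_mul_of_pos_left (by linarith) hε₀pos
      linarith
    linarith
  have hεxsq : ε ^ 2 * x ^ 2 < δ := by
    have h0 : 0 ≤ ε * x := by positivity
    calc ε ^ 2 * x ^ 2 = (ε * x) * (ε * x) := by ring
      _ < Real.sqrt δ * Real.sqrt δ := mul_self_lt_mul_self h0 hεx
      _ = δ := Real.mul_self_sqrt hδpos.le
  have hδM : δ * (1 + M + M ^ 2 / 4) = L ^ 2 / 16 := by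
    rw [hδ]; exact div_mul_cancel₀ _ hDpos.ne'
  have hDx : (0:ℝ) < 1 + x + x ^ 2 / 4 := by positivity
  have hPD : (1 - δ) * (1 + x + x ^ 2 / 4) < (x + 1) * Real.exp (-x) * (1 + x + x ^ 2 / 4) := by
    have hPgt : 1 - δ < (x + 1) * Real.exp (-x) := by linarith
    exact mul_lt_mul_of_pos_right hPgt hDx
  have hfin : x + 1 ≤ (1 - δ) * (1 + x + x ^ 2 / 4) := by
    have hx2M : x ^ 2 ≤ M ^ 2 := pow_le_pow_left₀ hxpos.le hxM.le 2
    have hδD : δ * (1 + x + x ^ 2 / 4) ≤ L ^ 2 / 16 := by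
      rw [← hδM]
      exact mul_le_mul_of_nonneg_left (by linarith) hδpos.le
    have hx2L : L ^ 2 / 16 < x ^ 2 / 4 := by
      have h6 : (L / 2) ^ 2 < x ^ 2 := pow_lt_pow_left₀ hxL (by positivity) (by norm_num)
      linarith [h6]
    linarith [hδD, hx2L]
  linarith [hPD, hup, hfin]

lemma iter_deriv_add_mul (c : ℝ) :
    ∀ (j : ℕ) (f g : ℝ → ℝ), ContDiff ℝ (⊤ : ℕ∞) f → ContDiff ℝ (⊤ : ℕ∞) g →
      deriv^[j] (fun u => f u + c * g u) = fun u => deriv^[j] f u + c * deriv^[j] g u := by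
  intro j
  induction j with
  | zero => intro f g _ _; rfl
  | succ j ih =>
    intro f g hf hg
    rw [Function.iterate_succ_apply, Function.iterate_succ_apply, Function.iterate_succ_apply]
    have hd : deriv (fun u => f u + c * g u) = fun u => deriv f u + c * deriv g u := by
      funext u
      rw [deriv_fun_add (hf.differentiable (by simp) u) (((hg.differentiable (by simp)) u).const_mul c),
        deriv_const_mul c ((hg.differentiable (by simp)) u)]
    rw [hd]
    exact ih _ _ (contDiff_infty_iff_deriv.mp hf).2 (contDiff_infty_iff_deriv.mp hg).2

/-- Lemma 5 of the paper: as `β₁ⁿ/β₂ⁿ → 0` the rescaled profiles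
`u ↦ (aⁿ/β₂ⁿ)·φⁿ(β₁ⁿ+β₂ⁿ−u/aⁿ)` converge to `u ↦ (eᵘ−1)/eᵘ` in `Cᵏ([0,L])`, i.e., all
derivatives up to order `k` converge uniformly on `[0,L]`. -/
theorem rescaled_profile_Ck_convergence (L : ℝ) (hL : 0 < L) (k : ℕ)
    (β₁ β₂ a : ℕ → ℝ)
    (h : ∀ n, 0 < β₁ n ∧ β₁ n < β₂ n)
    (hratio : Filter.Tendsto (fun n => β₁ n / β₂ n) Filter.atTop (nhds 0))
    (ha : ∀ n, 0 < a n ∧ F (β₁ n) (β₂ n) (a n) = 0)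
    (hdom : ∀ᶠ n in Filter.atTop, L < a n * (β₁ n + β₂ n)) :
    ∀ j ≤ k,
      TendstoUniformlyOn
        (fun n => deriv^[j] (fun u =>
          (a n / β₂ n) *
            ((a n * β₁ n - 1) * (Real.exp (a n * (β₁ n + β₂ n - u / a n)) - 1) / (a n) ^ 2
              + (β₁ n + β₂ n - u / a n) / a n)))
        (deriv^[j] (fun u => (Real.exp u - 1) / Real.exp u))
        Filter.atTop (Set.Icc 0 L) := by
  intro j _
  -- smoothness of the model functions
  have htgt : ContDiff ℝ (⊤ : ℕ∞) (fun u : ℝ => 1 - Real.exp (-u)) :=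
    contDiff_const.sub (Real.contDiff_exp.comp contDiff_neg)
  have hh : ContDiff ℝ (⊤ : ℕ∞) (fun u : ℝ => 1 - Real.exp (-u) - u) :=
    htgt.sub contDiff_id
  -- rewrite the target
  have htg : (fun u : ℝ => (Real.exp u - 1) / Real.exp u) = fun u => 1 - Real.exp (-u) := by
    funext u
    rw [Real.exp_neg]
    field_simp
  -- rewrite the profiles
  have hfn : ∀ n, (fun u =>
      (a n / β₂ n) *
        ((a n * β₁ n - 1) * (Real.exp (a n * (β₁ n + β₂ n - u / a n)) - 1) / (a n) ^ 2
          + (β₁ n + β₂ n - u / a n) / a n))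
      = fun u => (1 - Real.exp (-u)) + (1 / (a n * β₂ n)) * (1 - Real.exp (-u) - u) := by
    intro n
    funext u
    exact profile_eq (a n) (β₁ n) (β₂ n) (ha n).1 (h n).1 (h n).2 (ha n).2 u
  simp only [hfn, htg]
  have hder : ∀ n, deriv^[j]
      (fun u => (1 - Real.exp (-u)) + (1 / (a n * β₂ n)) * (1 - Real.exp (-u) - u))
      = fun u => deriv^[j] (fun u : ℝ => 1 - Real.exp (-u)) u
          + (1 / (a n * β₂ n)) * deriv^[j] (fun u : ℝ => 1 - Real.exp (-u) - u) u :=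
    fun n => iter_deriv_add_mul _ j _ _ htgt hh
  simp only [hder]
  -- the coefficient tends to 0
  have hc : Tendsto (fun n => 1 / (a n * β₂ n)) atTop (nhds 0) := by
    have h0 : Tendsto (fun n => (a n * β₂ n)⁻¹) atTop (nhds 0) :=
      (x_atTop L hL β₁ β₂ a h hratio ha hdom).inv_tendsto_atTop
    simpa only [one_div] using h0
  -- bound the j-th derivative of h on the compact interval
  have hcontH : Continuous (deriv^[j] (fun u : ℝ => 1 - Real.exp (-u) - u)) := by
    rw [← iteratedDeriv_eq_iterate]
    exact hh.continuous_iteratedDeriv j (by exact_mod_cast le_top)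
  obtain ⟨C, hC⟩ := (isCompact_Icc (a := (0:ℝ)) (b := L)).exists_bound_of_continuousOn
    hcontH.continuousOn
  rw [Metric.tendstoUniformlyOn_iff]
  intro ε hε
  have hCpos : 0 ≤ C := le_trans (norm_nonneg _) (hC 0 (Set.left_mem_Icc.mpr hL.le))
  have hev : ∀ᶠ n in atTop, |1 / (a n * β₂ n)| < ε / (C + 1) := by
    have := Metric.tendsto_nhds.mp hc (ε / (C + 1)) (by positivity)
    simpa only [Real.dist_eq, sub_zero] using this
  filter_upwards [hev] with n hn
  intro u hu
  have hbound : ‖deriv^[j] (fun u : ℝ => 1 - Real.exp (-u) - u) u‖ ≤ C := hC u hu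
  rw [Real.dist_eq]
  calc |deriv^[j] (fun u : ℝ => 1 - Real.exp (-u)) u -
        (deriv^[j] (fun u : ℝ => 1 - Real.exp (-u)) u
          + 1 / (a n * β₂ n) * deriv^[j] (fun u : ℝ => 1 - Real.exp (-u) - u) u)|
      = |1 / (a n * β₂ n)| * |deriv^[j] (fun u : ℝ => 1 - Real.exp (-u) - u) u| := by
        rw [show deriv^[j] (fun u : ℝ => 1 - Real.exp (-u)) u -
            (deriv^[j] (fun u : ℝ => 1 - Real.exp (-u)) u
              + 1 / (a n * β₂ n) * deriv^[j] (fun u : ℝ => 1 - Real.exp (-u) - u) u)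
            = -(1 / (a n * β₂ n) * deriv^[j] (fun u : ℝ => 1 - Real.exp (-u) - u) u) by ring,
          abs_neg, abs_mul]
    _ ≤ |1 / (a n * β₂ n)| * (C + 1) := by
        apply mul_le_mul_of_nonneg_left _ (abs_nonneg _)
        calc |deriv^[j] (fun u : ℝ => 1 - Real.exp (-u) - u) u| ≤ C := hbound
          _ ≤ C + 1 := by linarith
    _ < (ε / (C + 1)) * (C + 1) := by
        apply mul_lt_mul_of_pos_right hn (by positivity)
    _ = ε := by field_simp
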